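/- Suppose the potential q is even on [0,a], i.e. q(a−x) = q(x) for all x ∈ [0,a]. Then for every λ ∈ ℂ, S'(a) = C(a). -/

import Mathlib

/-- For an even potential `q` on `[0,a]`, one has `S\'(a) = C(a)`. -/
theorem even_potential_Sd_eq_C
    (a : ℝ) (ha : 0 < a) (q : ℝ → ℝ) (hq : ContinuousOn q (Set.Icc 0 a))
    (hqeven : ∀ x ∈ Set.Icc 0 a, q (a - x) = q x)
    (lam : ℂ) (C S Cd Sd : ℝ → ℂ)
    (hC : ∀ x ∈ Set.Icc 0 a, HasDerivWithinAt C (Cd x) (Set.Icc 0 a) x)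
    (hC' : ∀ x ∈ Set.Icc 0 a,
      HasDerivWithinAt Cd ((q x : ℂ) * C x - lam * C x) (Set.Icc 0 a) x)
    (hS : ∀ x ∈ Set.Icc 0 a, HasDerivWithinAt S (Sd x) (Set.Icc 0 a) x)
    (hS' : ∀ x ∈ Set.Icc 0 a,
      HasDerivWithinAt Sd ((q x : ℂ) * S x - lam * S x) (Set.Icc 0 a) x)
    (hC0 : C 0 = 1) (hCd0 : Cd 0 = 0) (hS0 : S 0 = 0) (hSd0 : Sd 0 = 1) :
    Sd a = C a := by
  set I := Set.Icc (0:ℝ) a with hI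
  have hmaps : Set.MapsTo (fun x : ℝ => a - x) I I := by
    intro x hx
    simp only [hI, Set.mem_Icc] at hx ⊢
    constructor <;> linarith [hx.1, hx.2]
  set F : ℝ → ℂ := fun x => C (a - x) * Sd x + Cd (a - x) * S x with hF
  have hFderiv : ∀ x ∈ I, HasDerivWithinAt F 0 I x := by
    intro x hx
    have hx' : a - x ∈ I := hmaps hx
    have hg : HasDerivWithinAt (fun y : ℝ => a - y) (-1) I x := by
      simpa using (hasDerivWithinAt_id x I).const_sub a
    have h1 : HasDerivWithinAt (fun y => C (a - y)) ((-1 : ℝ) • Cd (a - x)) I x :=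
      (hC _ hx').scomp x hg hmaps
    have h2 : HasDerivWithinAt (fun y => Cd (a - y))
        ((-1 : ℝ) • ((q (a - x) : ℂ) * C (a - x) - lam * C (a - x))) I x :=
      (hC' _ hx').scomp x hg hmaps
    have h3 := (h1.mul (hS' x hx)).add (h2.mul (hS x hx))
    refine h3.congr_deriv ?_
    have hqe : (q (a - x) : ℂ) = (q x : ℂ) := by rw [hqeven x hx]
    rw [hqe]
    simp only [neg_one_smul]
    ring
  have hcont : ContinuousOn F I := fun x hx => (hFderiv x hx).continuousWithinAt
  have hconst : F a = F 0 := by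
    have := constant_of_has_deriv_right_zero (a := 0) (b := a) hcont ?_
    · exact this a (Set.right_mem_Icc.mpr ha.le)
    · intro x hx
      exact (hFderiv x (Set.Ico_subset_Icc_self hx)).mono_of_mem_nhdsWithin
        (Icc_mem_nhdsGE_of_mem hx)
  have h0 : F 0 = C a := by simp [hF, hSd0, hS0]
  have haa : F a = Sd a := by simp [hF, hC0, hCd0]
  rw [← haa, hconst, h0]
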